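/- arXiv:1502.04851 — 3 statements merged into one kernel-verified Lean document; each statement's English description precedes it below -/
import Mathlib

section
/- Let f be bounded, vanish on (−∞, 0], and satisfy f(t) ~ C_d t^{d−1} as t → ∞ with d ∈ (0, 1/2), C_d > 0. Fix ε = 1/m for m ∈ ℕ, and define v(t) := C(g(t) t^{d−1} 1_{(1,∞)}(t) + 1_{[−ε,1]}(t)) where g : [1,∞) → (0,∞) is bounded and decreasing with g(x) → 0 as x → ∞ and C > 0. Then for every integer n ≥ 1 and h ∈ ℕ₀: Σ_{i∈ℤ} |f(εi) v(n + h + εi)| = O(n^{2d−1} g(n)) as n → ∞. -/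
open Filter Asymptotics

lemma antirpow (p : ℝ) (hp : p ≤ 0) {s : Set ℝ} (hs : ∀ x ∈ s, (0:ℝ) < x) :
    AntitoneOn (fun x : ℝ => x ^ p) s :=
  fun x hx _ _ hxy => Real.rpow_le_rpow_of_nonpos (hs x hx) hxy hp

lemma sum_Icc_rpow_le (p : ℝ) (hp1 : -1 < p) (hp0 : p < 0) (N : ℕ) :
    ∑ j ∈ Finset.Icc 1 N, (j:ℝ) ^ p ≤ 1 + (N:ℝ) ^ (p+1) / (p+1) := by
  have hp1' : 0 < p + 1 := by linarith
  rcases Nat.eq_zero_or_pos N with h0 | h1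
  · subst h0
    simp [Real.zero_rpow (ne_of_gt hp1')]
  · have hanti : AntitoneOn (fun x : ℝ => x ^ p) (Set.Icc (1:ℕ) (N:ℕ)) := by
      apply antirpow p hp0.le
      intro x hx
      have := hx.1
      simp only [Nat.cast_one] at this
      linarith
    have key := AntitoneOn.sum_le_integral_Ico h1 hanti
    have hint : ∫ x in (1:ℕ)..(N:ℕ), x ^ p = ((N:ℝ) ^ (p+1) - 1 ^ (p+1)) / (p+1) := by
      rw [integral_rpow (Or.inl hp1)]
      norm_num
    rw [hint] at key
    have heq : ∑ j ∈ Finset.Icc 1 N, (j:ℝ) ^ p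
        = ∑ i ∈ Finset.Ico 1 N, (((i:ℕ):ℝ) + 1) ^ p + 1 := by
      rw [show Finset.Icc 1 N = Finset.Ico 1 (N+1) by rw [Finset.Ico_add_one_right_eq_Icc]]
      rw [Finset.sum_Ico_eq_sum_range, Finset.sum_Ico_eq_sum_range]
      rw [show N + 1 - 1 = (N - 1) + 1 by omega, Finset.sum_range_succ']
      rw [show (1:ℕ) + 0 = 1 by rfl]
      congr 1
      · apply Finset.sum_congr rfl
        intro i _
        congr 1
        push_cast
        ring
      · norm_num
    rw [heq]
    have h1p : (1:ℝ) ^ (p+1) = 1 := Real.one_rpow _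
    rw [h1p] at key
    have : ∑ i ∈ Finset.Ico 1 N, (((i:ℕ):ℝ) + 1) ^ p ≤ (↑N ^ (p + 1) - 1) / (p + 1) := by
      refine le_trans (le_of_eq (Finset.sum_congr rfl fun i _ => ?_)) key
      congr 1
      push_cast
      ring
    have hdd : ((N:ℝ) ^ (p + 1) - 1) / (p + 1) ≤ (N:ℝ) ^ (p+1) / (p+1) := by
      gcongr
      linarith
    linarith

lemma sum_Ioc_rpow_le (p : ℝ) (hp : p < -1) (N M : ℕ) (hN : 1 ≤ N) :
    ∑ j ∈ Finset.Ioc N M, (j:ℝ) ^ p ≤ (N:ℝ) ^ (p+1) / (-(p+1)) := by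
  have hp1 : p + 1 < 0 := by linarith
  have hNpos : (0:ℝ) < N := by exact_mod_cast hN
  have hrhs : 0 ≤ (N:ℝ) ^ (p+1) / (-(p+1)) := by
    apply div_nonneg (Real.rpow_nonneg hNpos.le _) (by linarith)
  rcases le_or_gt M N with hMN | hNM
  · rw [Finset.Ioc_eq_empty (by omega)]
    simpa using hrhs
  · have hanti : AntitoneOn (fun x : ℝ => x ^ p) (Set.Icc (N:ℕ) (M:ℕ)) := by
      apply antirpow p (by linarith)
      intro x hx
      have h' : (N:ℝ) ≤ x := hx.1
      linarith
    have key := AntitoneOn.sum_le_integral_Ico hNM.le hanti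
    have h0 : (0:ℝ) ∉ Set.uIcc (N:ℝ) (M:ℝ) := by
      rw [Set.uIcc_of_le (by exact_mod_cast hNM.le)]
      intro hx
      have := hx.1
      linarith
    have hint : ∫ x in (N:ℕ)..(M:ℕ), x ^ p = ((M:ℝ) ^ (p+1) - (N:ℝ) ^ (p+1)) / (p+1) := by
      rw [integral_rpow (Or.inr ⟨by linarith, h0⟩)]
    rw [hint] at key
    have heq : ∑ j ∈ Finset.Ioc N M, (j:ℝ) ^ p = ∑ i ∈ Finset.Ico N M, (((i:ℕ):ℝ) + 1) ^ p := by
      rw [show Finset.Ioc N M = Finset.Ico (N+1) (M+1) by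
        rw [Finset.Ico_add_one_right_eq_Icc, Finset.Icc_add_one_left_eq_Ioc]]
      rw [Finset.sum_Ico_eq_sum_range, Finset.sum_Ico_eq_sum_range]
      rw [show M + 1 - (N + 1) = M - N by omega]
      apply Finset.sum_congr rfl
      intro i _
      congr 1
      push_cast
      ring
    rw [heq]
    have key' : ∑ i ∈ Finset.Ico N M, (((i:ℕ):ℝ) + 1) ^ p
        ≤ ((M:ℝ) ^ (p+1) - (N:ℝ) ^ (p+1)) / (p+1) := by
      refine le_trans (le_of_eq (Finset.sum_congr rfl fun i _ => ?_)) key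
      congr 1
      push_cast
      ring
    have hM : (0:ℝ) ≤ (M:ℝ) ^ (p+1) := Real.rpow_nonneg (by positivity) _
    calc ∑ i ∈ Finset.Ico N M, (((i:ℕ):ℝ) + 1) ^ p
        ≤ ((M:ℝ) ^ (p+1) - (N:ℝ) ^ (p+1)) / (p+1) := key'
      _ = ((N:ℝ) ^ (p+1) - (M:ℝ) ^ (p+1)) / (-(p+1)) := by
          rw [div_neg, ← neg_div, neg_sub]
      _ ≤ (N:ℝ) ^ (p+1) / (-(p+1)) := by
          gcongr ?x / _
          · linarith
          · linarith


lemma exists_global_bound (f : ℝ → ℝ) (d Cd K : ℝ) (hd1 : d < 1) (hCd : 0 < Cd) (hK : 0 < K)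
    (hbddf : ∀ t > (0:ℝ), |f t| ≤ K * max 1 (t ^ (d - 1)))
    (hasymp : Tendsto (fun t => f t / t ^ (d - 1)) atTop (nhds Cd)) :
    ∃ A, 0 < A ∧ ∀ t > (0:ℝ), |f t| ≤ A * t ^ (d-1) := by
  have h2 : ∀ᶠ t in atTop, |f t| ≤ 2*Cd * t^(d-1) := by
    have hdi := Metric.tendsto_nhds.mp hasymp Cd hCd
    filter_upwards [hdi, eventually_gt_atTop 0] with t hdist ht
    have htp : (0:ℝ) < t ^ (d-1) := Real.rpow_pos_of_pos ht _
    rw [Real.dist_eq] at hdist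
    have habs : |f t / t^(d-1)| ≤ 2*Cd := by
      have h3 := abs_sub_abs_le_abs_sub (f t / t^(d-1)) Cd
      rw [abs_of_pos hCd] at h3
      linarith
    have heq : |f t| = |f t / t^(d-1)| * t^(d-1) := by
      rw [abs_div, abs_of_pos htp, div_mul_cancel₀]
      exact ne_of_gt htp
    rw [heq]
    exact mul_le_mul_of_nonneg_right habs htp.le
  obtain ⟨T0, hT0⟩ := eventually_atTop.mp h2
  set T := max T0 1 with hTdef
  have hT1 : (1:ℝ) ≤ T := le_max_right _ _
  have hTpow : (1:ℝ) ≤ T ^ (1-d) := Real.one_le_rpow hT1 (by linarith)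
  refine ⟨max (2*Cd) (K * T^(1-d)), lt_max_of_lt_left (by linarith), ?_⟩
  intro t ht
  have hrp : (0:ℝ) ≤ t ^ (d-1) := Real.rpow_nonneg ht.le _
  rcases le_or_gt T t with hTt | htT
  · have h4 := hT0 t (le_trans (le_max_left _ _) hTt)
    calc |f t| ≤ 2*Cd * t^(d-1) := h4
      _ ≤ max (2*Cd) (K * T^(1-d)) * t^(d-1) :=
        mul_le_mul_of_nonneg_right (le_max_left _ _) hrp
  · have hbdd := hbddf t ht
    rcases le_or_gt t 1 with ht1 | ht1
    · have hmax : max 1 (t^(d-1)) = t^(d-1) :=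
        max_eq_right (Real.one_le_rpow_of_pos_of_le_one_of_nonpos ht ht1 (by linarith))
      rw [hmax] at hbdd
      have hKA : K ≤ max (2*Cd) (K * T^(1-d)) := by
        have : K ≤ K * T^(1-d) := by nlinarith
        exact this.trans (le_max_right _ _)
      exact hbdd.trans (mul_le_mul_of_nonneg_right hKA hrp)
    · have hmax : max 1 (t^(d-1)) = 1 :=
        max_eq_left (Real.rpow_le_one_of_one_le_of_nonpos ht1.le (by linarith))
      rw [hmax, mul_one] at hbdd
      have hone : (1:ℝ) ≤ T^(1-d) * t^(d-1) := by
        have h5 : t^(1-d) ≤ T^(1-d) := Real.rpow_le_rpow (by linarith) htT.le (by linarith)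
        have h6 : t^(1-d) * t^(d-1) = 1 := by
          rw [← Real.rpow_add ht]; norm_num
        nlinarith [Real.rpow_pos_of_pos ht (d-1)]
      calc |f t| ≤ K := hbdd
        _ = K * 1 := (mul_one K).symm
        _ ≤ K * (T^(1-d) * t^(d-1)) := mul_le_mul_of_nonneg_left hone hK.le
        _ = (K * T^(1-d)) * t^(d-1) := by ring
        _ ≤ max (2*Cd) (K * T^(1-d)) * t^(d-1) :=
          mul_le_mul_of_nonneg_right (le_max_right _ _) hrp
open Filter Asymptotics


/-- With `v(t) = C(g(t) t^{d-1} 1_{(1,∞)}(t) + 1_{[-ε,1]}(t))`, the sum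
`Σ_{i∈ℤ} |f(εi) v(n+h+εi)|` is `O(n^{2d-1} g(n))`. -/
theorem sum_f_v_bigO (f g : ℝ → ℝ) (d Cd C K : ℝ) (m : ℕ) (hm : 0 < m) (h : ℕ)
    (hd0 : 0 < d) (hd : d < 1/2) (hCd : 0 < Cd) (hC : 0 < C) (hK : 0 < K)
    (hbddf : ∀ t > (0:ℝ), |f t| ≤ K * max 1 (t ^ (d - 1)))
    (hzero : ∀ t ≤ (0:ℝ), f t = 0)
    (hasymp : Tendsto (fun t => f t / t ^ (d - 1)) atTop (nhds Cd))
    (hg_pos : ∀ x ≥ (1:ℝ), 0 < g x)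
    (hg_bdd : ∃ M, ∀ x ≥ (1:ℝ), g x ≤ M)
    (hg_anti : ∀ x y, (1:ℝ) ≤ x → x ≤ y → g y ≤ g x)
    (hg_lim : Tendsto g atTop (nhds 0)) :
    (fun n : ℕ => ∑' i : ℤ,
        |f ((m:ℝ)⁻¹ * i) *
          (C * ((if 1 < (n + h + (m:ℝ)⁻¹ * i : ℝ) then
                  g (n + h + (m:ℝ)⁻¹ * i) * (n + h + (m:ℝ)⁻¹ * i) ^ (d - 1) else 0)
            + (if -(m:ℝ)⁻¹ ≤ (n + h + (m:ℝ)⁻¹ * i : ℝ) ∧ (n + h + (m:ℝ)⁻¹ * i : ℝ) ≤ 1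
                then 1 else 0)))|)
      =O[atTop] (fun n : ℕ => (n : ℝ) ^ (2 * d - 1) * g n) := by
  obtain ⟨A, hApos, hA⟩ :=
    exists_global_bound f d Cd K (by linarith) hCd hK hbddf hasymp
  have hm1 : (1:ℝ) ≤ (m:ℝ) := by exact_mod_cast hm
  have hmpos : (0:ℝ) < m := by linarith
  have hε : (0:ℝ) < (m:ℝ)⁻¹ := by positivity
  have h12d : (0:ℝ) < 1 - 2*d := by linarith
  set B := C * A * ((m:ℝ) * (1 + 1/d) + (m:ℝ)/(1-2*d)) with hBdef
  rw [isBigO_iff]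
  refine ⟨B, ?_⟩
  filter_upwards [eventually_ge_atTop 1] with n hn1
  have hn1' : (1:ℝ) ≤ (n:ℝ) := by exact_mod_cast hn1
  have hnpos : (0:ℝ) < (n:ℝ) := by linarith
  have hgn : 0 < g n := hg_pos _ hn1'
  have hnr : (0:ℝ) < (n:ℝ) ^ (2*d-1) := Real.rpow_pos_of_pos hnpos _
  rw [Real.norm_eq_abs, Real.norm_eq_abs, abs_of_pos (mul_pos hnr hgn),
      abs_of_nonneg (tsum_nonneg fun i => abs_nonneg _)]
  have hBR : 0 ≤ B * ((n:ℝ) ^ (2*d-1) * g n) := by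
    have hB0 : 0 ≤ B := by
      rw [hBdef]
      have : 0 < (m:ℝ) * (1 + 1/d) + (m:ℝ)/(1-2*d) := by positivity
      positivity
    exact mul_nonneg hB0 (mul_nonneg hnr.le hgn.le)
  apply tsum_le_of_sum_le' hBR
  intro s
  set c : ℕ → ℝ := fun j =>
    A * ((m:ℝ)⁻¹ * j) ^ (d-1) * (C * (g n * ((n:ℝ) + (m:ℝ)⁻¹ * j) ^ (d-1))) with hcdef
  have hcnonneg : ∀ j, 0 ≤ c j := by
    intro j
    apply mul_nonneg (mul_nonneg hApos.le (Real.rpow_nonneg (by positivity) _))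
    exact mul_nonneg hC.le (mul_nonneg hgn.le (Real.rpow_nonneg (by positivity) _))
  -- termwise bound
  have hterm : ∀ i : ℤ,
      |f ((m:ℝ)⁻¹ * i) *
          (C * ((if 1 < ((n:ℝ) + h + (m:ℝ)⁻¹ * i : ℝ) then
                  g ((n:ℝ) + h + (m:ℝ)⁻¹ * i) * ((n:ℝ) + h + (m:ℝ)⁻¹ * i) ^ (d - 1) else 0)
            + (if -(m:ℝ)⁻¹ ≤ ((n:ℝ) + h + (m:ℝ)⁻¹ * i : ℝ) ∧ ((n:ℝ) + h + (m:ℝ)⁻¹ * i : ℝ) ≤ 1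
                then 1 else 0)))|
        ≤ if 1 ≤ i then c i.toNat else 0 := by
    intro i
    by_cases hi : 1 ≤ i
    · have hi1 : (1:ℝ) ≤ (i:ℝ) := by exact_mod_cast hi
      have hεi : 0 < (m:ℝ)⁻¹ * (i:ℝ) := mul_pos hε (by linarith)
      have hh : (0:ℝ) ≤ (h:ℝ) := Nat.cast_nonneg h
      have ht1 : 1 < (n:ℝ) + (h:ℝ) + (m:ℝ)⁻¹ * i := by linarith
      rw [if_pos ht1, if_neg (by rintro ⟨_, hle⟩; linarith), add_zero, if_pos hi]
      have htoNat : ((i.toNat : ℕ) : ℝ) = (i : ℝ) := by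
        exact_mod_cast Int.toNat_of_nonneg (by omega)
      have hgt : 0 < g ((n:ℝ) + h + (m:ℝ)⁻¹ * i) := hg_pos _ (by linarith)
      have hrt : (0:ℝ) ≤ ((n:ℝ) + h + (m:ℝ)⁻¹ * i) ^ (d-1) :=
        Real.rpow_nonneg (by linarith) _
      rw [abs_mul, abs_of_nonneg (mul_nonneg hC.le (mul_nonneg hgt.le hrt))]
      rw [hcdef]
      simp only [htoNat]
      apply mul_le_mul (hA _ hεi) ?_ (mul_nonneg hC.le (mul_nonneg hgt.le hrt))
        (mul_nonneg hApos.le (Real.rpow_nonneg hεi.le _))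
      have hg2 : g ((n:ℝ) + h + (m:ℝ)⁻¹ * i) ≤ g n := hg_anti _ _ hn1' (by linarith)
      have hr2 : ((n:ℝ) + h + (m:ℝ)⁻¹ * i) ^ (d-1) ≤ ((n:ℝ) + (m:ℝ)⁻¹ * i) ^ (d-1) :=
        Real.rpow_le_rpow_of_nonpos (by linarith) (by linarith) (by linarith)
      have hrn : (0:ℝ) ≤ ((n:ℝ) + (m:ℝ)⁻¹ * i) ^ (d-1) := Real.rpow_nonneg (by linarith) _
      apply mul_le_mul_of_nonneg_left ?_ hC.le
      exact mul_le_mul hg2 hr2 hrt hgn.le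
    · have hi0 : (m:ℝ)⁻¹ * (i:ℝ) ≤ 0 := by
        apply mul_nonpos_of_nonneg_of_nonpos hε.le
        exact_mod_cast (by omega : i ≤ 0)
      rw [hzero _ hi0, zero_mul, abs_zero, if_neg hi]
  refine le_trans (Finset.sum_le_sum fun i _ => hterm i) ?_
  set N := m * n with hNdef
  set M := max N (s.sup fun i => i.toNat) with hMdef
  have hNM : N ≤ M := le_max_left _ _
  have hN1 : 1 ≤ N := Nat.one_le_iff_ne_zero.mpr (Nat.mul_ne_zero (by omega) (by omega))
  have hstep2 : ∑ i ∈ s, (if 1 ≤ i then c i.toNat else 0) ≤ ∑ j ∈ Finset.Icc 1 M, c j := by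
    rw [← Finset.sum_filter]
    have himg : ∑ j ∈ (s.filter fun i => 1 ≤ i).image Int.toNat, c j
        = ∑ i ∈ s.filter (fun i => 1 ≤ i), c i.toNat := by
      apply Finset.sum_image
      intro x hx y hy hxy
      have hx1 := (Finset.mem_filter.mp hx).2
      have hy1 := (Finset.mem_filter.mp hy).2
      omega
    rw [← himg]
    apply Finset.sum_le_sum_of_subset_of_nonneg ?_ (fun j _ _ => hcnonneg j)
    intro j hj
    obtain ⟨i, hi, rfl⟩ := Finset.mem_image.mp hj
    have his := (Finset.mem_filter.mp hi).1
    have hi1 := (Finset.mem_filter.mp hi).2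
    rw [Finset.mem_Icc]
    constructor
    · omega
    · exact le_trans (Finset.le_sup (f := fun i : ℤ => i.toNat) his) (le_max_right _ _)
  refine le_trans hstep2 ?_
  have hsplit : ∑ j ∈ Finset.Icc 1 M, c j
      = ∑ j ∈ Finset.Icc 1 N, c j + ∑ j ∈ Finset.Ioc N M, c j := by
    rw [show (1:ℕ) = 0+1 from rfl, Finset.Icc_add_one_left_eq_Ioc, Finset.Icc_add_one_left_eq_Ioc]
    exact (Finset.sum_Ioc_consecutive _ (Nat.zero_le N) hNM).symm
  rw [hsplit]
  -- power splitting facts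
  have hpow_split : ∀ (j : ℕ) (p : ℝ), ((m:ℝ)⁻¹ * j) ^ p = (m:ℝ)^(-p) * (j:ℝ)^p := by
    intro j p
    rw [Real.mul_rpow (by positivity) (Nat.cast_nonneg j), Real.inv_rpow hmpos.le,
        ← Real.rpow_neg hmpos.le]
  have hACg : 0 ≤ A * C * g n := mul_nonneg (mul_nonneg hApos.le hC.le) hgn.le
  -- Part 1
  have hQ1nonneg : 0 ≤ A * (m:ℝ)^(1-d) * C * g n * (n:ℝ)^(d-1) := by
    apply mul_nonneg ?_ (Real.rpow_nonneg hnpos.le _)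
    apply mul_nonneg ?_ hgn.le
    apply mul_nonneg ?_ hC.le
    exact mul_nonneg hApos.le (Real.rpow_nonneg hmpos.le _)
  have hQ1 : ∀ j ∈ Finset.Icc 1 N, c j
      ≤ (A * (m:ℝ)^(1-d) * C * g n * (n:ℝ)^(d-1)) * (j:ℝ)^(d-1) := by
    intro j hj
    have hjr : (0:ℝ) ≤ (j:ℝ) := Nat.cast_nonneg j
    have hstep : ((n:ℝ) + (m:ℝ)⁻¹*j) ^ (d-1) ≤ (n:ℝ)^(d-1) :=
      Real.rpow_le_rpow_of_nonpos hnpos (le_add_of_nonneg_right (by positivity)) (by linarith)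
    have hfac : 0 ≤ A * (m:ℝ)^(1-d) * C * g n * (j:ℝ)^(d-1) := by
      apply mul_nonneg ?_ (Real.rpow_nonneg hjr _)
      apply mul_nonneg ?_ hgn.le
      apply mul_nonneg ?_ hC.le
      exact mul_nonneg hApos.le (Real.rpow_nonneg hmpos.le _)
    calc c j = (A * (m:ℝ)^(1-d) * C * g n * (j:ℝ)^(d-1)) * ((n:ℝ)+(m:ℝ)⁻¹*j)^(d-1) := by
          simp only [hcdef]
          rw [hpow_split j (d-1), show -(d-1) = 1-d by ring]
          ring
      _ ≤ (A * (m:ℝ)^(1-d) * C * g n * (j:ℝ)^(d-1)) * (n:ℝ)^(d-1) :=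
          mul_le_mul_of_nonneg_left hstep hfac
      _ = (A * (m:ℝ)^(1-d) * C * g n * (n:ℝ)^(d-1)) * (j:ℝ)^(d-1) := by ring
  have hP1 : ∑ j ∈ Finset.Icc 1 N, c j
      ≤ (A * (m:ℝ)^(1-d) * C * g n * (n:ℝ)^(d-1)) * (1 + (N:ℝ)^d / d) := by
    calc ∑ j ∈ Finset.Icc 1 N, c j
        ≤ ∑ j ∈ Finset.Icc 1 N, (A * (m:ℝ)^(1-d) * C * g n * (n:ℝ)^(d-1)) * (j:ℝ)^(d-1) :=
          Finset.sum_le_sum hQ1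
      _ = (A * (m:ℝ)^(1-d) * C * g n * (n:ℝ)^(d-1)) * ∑ j ∈ Finset.Icc 1 N, (j:ℝ)^(d-1) := by
          rw [Finset.mul_sum]
      _ ≤ (A * (m:ℝ)^(1-d) * C * g n * (n:ℝ)^(d-1)) * (1 + (N:ℝ)^(d-1+1) / (d-1+1)) :=
          mul_le_mul_of_nonneg_left
            (sum_Icc_rpow_le (d-1) (by linarith) (by linarith) N) hQ1nonneg
      _ = (A * (m:ℝ)^(1-d) * C * g n * (n:ℝ)^(d-1)) * (1 + (N:ℝ)^d / d) := by
          rw [show d-1+1 = d by ring]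
  -- Part 2
  have hQ2nonneg : 0 ≤ A * (m:ℝ)^(2-2*d) * C * g n := by
    apply mul_nonneg ?_ hgn.le
    apply mul_nonneg ?_ hC.le
    exact mul_nonneg hApos.le (Real.rpow_nonneg hmpos.le _)
  have hQ2 : ∀ j ∈ Finset.Ioc N M, c j ≤ (A * (m:ℝ)^(2-2*d) * C * g n) * (j:ℝ)^(2*d-2) := by
    intro j hj
    have hjN : N < j := (Finset.mem_Ioc.mp hj).1
    have hj1 : (1:ℝ) ≤ (j:ℝ) := by exact_mod_cast (by omega : 1 ≤ j)
    have hεj : 0 < (m:ℝ)⁻¹ * (j:ℝ) := mul_pos hε (by linarith)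
    have hstep : ((n:ℝ) + (m:ℝ)⁻¹*j)^(d-1) ≤ ((m:ℝ)⁻¹*j)^(d-1) :=
      Real.rpow_le_rpow_of_nonpos hεj (by linarith) (by linarith)
    have hfac : 0 ≤ A * C * g n * ((m:ℝ)⁻¹*(j:ℝ))^(d-1) :=
      mul_nonneg hACg (Real.rpow_nonneg hεj.le _)
    have hcomb : ((m:ℝ)⁻¹*(j:ℝ))^(d-1) * ((m:ℝ)⁻¹*(j:ℝ))^(d-1) = ((m:ℝ)⁻¹*(j:ℝ))^(2*d-2) := by
      rw [← Real.rpow_add hεj, show d-1+(d-1) = 2*d-2 by ring]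
    calc c j = (A * C * g n * ((m:ℝ)⁻¹*(j:ℝ))^(d-1)) * ((n:ℝ)+(m:ℝ)⁻¹*j)^(d-1) := by
          simp only [hcdef]; ring
      _ ≤ (A * C * g n * ((m:ℝ)⁻¹*(j:ℝ))^(d-1)) * ((m:ℝ)⁻¹*(j:ℝ))^(d-1) :=
          mul_le_mul_of_nonneg_left hstep hfac
      _ = (A * C * g n) * (((m:ℝ)⁻¹*(j:ℝ))^(d-1) * ((m:ℝ)⁻¹*(j:ℝ))^(d-1)) := by ring
      _ = (A * (m:ℝ)^(2-2*d) * C * g n) * (j:ℝ)^(2*d-2) := by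
          rw [hcomb, hpow_split j (2*d-2), show -(2*d-2) = 2-2*d by ring]
          ring
  have hP2 : ∑ j ∈ Finset.Ioc N M, c j
      ≤ (A * (m:ℝ)^(2-2*d) * C * g n) * ((N:ℝ)^(2*d-1)/(1-2*d)) := by
    calc ∑ j ∈ Finset.Ioc N M, c j
        ≤ ∑ j ∈ Finset.Ioc N M, (A * (m:ℝ)^(2-2*d) * C * g n) * (j:ℝ)^(2*d-2) :=
          Finset.sum_le_sum hQ2
      _ = (A * (m:ℝ)^(2-2*d) * C * g n) * ∑ j ∈ Finset.Ioc N M, (j:ℝ)^(2*d-2) := by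
          rw [Finset.mul_sum]
      _ ≤ (A * (m:ℝ)^(2-2*d) * C * g n) * ((N:ℝ)^(2*d-2+1)/(-(2*d-2+1))) :=
          mul_le_mul_of_nonneg_left
            (sum_Ioc_rpow_le (2*d-2) (by linarith) N M hN1) hQ2nonneg
      _ = (A * (m:ℝ)^(2-2*d) * C * g n) * ((N:ℝ)^(2*d-1)/(1-2*d)) := by
          rw [show 2*d-2+1 = 2*d-1 by ring, show -(2*d-1) = 1-2*d by ring]
  -- final arithmetic
  have hNcast : ((N:ℕ):ℝ) = (m:ℝ)*(n:ℝ) := by rw [hNdef]; push_cast; ring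
  have keyA : (m:ℝ)^(1-d)*(n:ℝ)^(d-1)*((N:ℕ):ℝ)^d = (m:ℝ)*(n:ℝ)^(2*d-1) := by
    rw [hNcast, Real.mul_rpow hmpos.le hnpos.le,
        show (m:ℝ)^(1-d)*(n:ℝ)^(d-1)*((m:ℝ)^d*(n:ℝ)^d)
          = ((m:ℝ)^(1-d)*(m:ℝ)^d)*((n:ℝ)^(d-1)*(n:ℝ)^d) by ring,
        ← Real.rpow_add hmpos, ← Real.rpow_add hnpos,
        show (1-d)+d = (1:ℝ) by ring, show (d-1)+d = 2*d-1 by ring, Real.rpow_one]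
  have keyB : (m:ℝ)^(2-2*d)*((N:ℕ):ℝ)^(2*d-1) = (m:ℝ)*(n:ℝ)^(2*d-1) := by
    rw [hNcast, Real.mul_rpow hmpos.le hnpos.le,
        show (m:ℝ)^(2-2*d)*((m:ℝ)^(2*d-1)*(n:ℝ)^(2*d-1))
          = ((m:ℝ)^(2-2*d)*(m:ℝ)^(2*d-1))*(n:ℝ)^(2*d-1) by ring,
        ← Real.rpow_add hmpos, show (2-2*d)+(2*d-1) = (1:ℝ) by ring, Real.rpow_one]
  have extra : (m:ℝ)^(1-d)*(n:ℝ)^(d-1) ≤ (m:ℝ)*(n:ℝ)^(2*d-1) := by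
    have em : (m:ℝ)^(1-d) ≤ (m:ℝ) := by
      have := Real.rpow_le_rpow_of_exponent_le hm1 (show 1-d ≤ (1:ℝ) by linarith)
      rwa [Real.rpow_one] at this
    have en : (n:ℝ)^(d-1) ≤ (n:ℝ)^(2*d-1) :=
      Real.rpow_le_rpow_of_exponent_le hn1' (by linarith)
    exact mul_le_mul em en (Real.rpow_nonneg hnpos.le _) hmpos.le
  have e1 : (A * (m:ℝ)^(1-d) * C * g n * (n:ℝ)^(d-1)) * (1 + (N:ℝ)^d / d)
      = A*C*g n*((m:ℝ)^(1-d)*(n:ℝ)^(d-1))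
        + A*C*g n*(((m:ℝ)^(1-d)*(n:ℝ)^(d-1)*((N:ℕ):ℝ)^d)/d) := by ring
  rw [keyA] at e1
  have e2 : (A * (m:ℝ)^(2-2*d) * C * g n) * ((N:ℝ)^(2*d-1)/(1-2*d))
      = A*C*g n*(((m:ℝ)^(2-2*d)*((N:ℕ):ℝ)^(2*d-1))/(1-2*d)) := by ring
  rw [keyB] at e2
  have hX : A*C*g n*((m:ℝ)^(1-d)*(n:ℝ)^(d-1)) ≤ A*C*g n*((m:ℝ)*(n:ℝ)^(2*d-1)) :=
    mul_le_mul_of_nonneg_left extra hACg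
  have hrhs_eq : B * ((n:ℝ)^(2*d-1) * g n)
      = A*C*g n*((m:ℝ)*(n:ℝ)^(2*d-1)) + A*C*g n*(((m:ℝ)*(n:ℝ)^(2*d-1))/d)
        + A*C*g n*(((m:ℝ)*(n:ℝ)^(2*d-1))/(1-2*d)) := by
    rw [hBdef]; field_simp
  linarith [hP1, hP2, e1, e2]
end

section
/- Let w(t) := C(t^{2d−2} 1_{(1,∞)}(t) + 1_{[−ε,1]}(t)) with d ∈ (0, 1/2), C > 0, ε = 1/m for m ∈ ℕ. Then for every integer n ≥ 1, Σ_{i∈ℤ} w(εi) w(εi + n) = O(n^{2d−2}) as n → ∞, and consequently Σ_{t,s=1}^N Σ_{i∈ℤ} w(εi) w(εi + s − t) = O(N) as N → ∞. -/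
open Filter Asymptotics

/-- With `w(t) = C(t^{2d-2} 1_{(1,∞)}(t) + 1_{[-ε,1]}(t))`,
`Σ_{i∈ℤ} w(εi)w(εi+n) = O(n^{2d-2})` and the double sum over `t,s ∈ {1,…,N}` is `O(N)`. -/
theorem sum_w_w_bigO (d C : ℝ) (m : ℕ) (hm : 0 < m)
    (hd0 : 0 < d) (hd : d < 1/2) (hC : 0 < C)
    (w : ℝ → ℝ)
    (hw : ∀ t : ℝ, w t =
      C * ((if 1 < t then t ^ (2 * d - 2) else 0)
        + (if -(m:ℝ)⁻¹ ≤ t ∧ t ≤ 1 then 1 else 0))) :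
    ((fun n : ℕ => ∑' i : ℤ, w ((m:ℝ)⁻¹ * i) * w ((m:ℝ)⁻¹ * i + n))
        =O[atTop] (fun n : ℕ => (n : ℝ) ^ (2 * d - 2)))
    ∧ ((fun N : ℕ => ∑ t ∈ Finset.Icc 1 N, ∑ s ∈ Finset.Icc 1 N,
          ∑' i : ℤ, w ((m:ℝ)⁻¹ * i) * w ((m:ℝ)⁻¹ * i + (s - t : ℤ)))
        =O[atTop] (fun N : ℕ => (N : ℝ))) := by
  have hm' : (0:ℝ) < (m:ℝ) := by exact_mod_cast hm
  set ε : ℝ := (m:ℝ)⁻¹ with hεdef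
  have hε0 : 0 < ε := inv_pos.mpr hm'
  have hε1 : ε ≤ 1 := by
    rw [hεdef]
    exact inv_le_one_of_one_le₀ (by exact_mod_cast hm)
  have hεm : ε * (m:ℝ) = 1 := inv_mul_cancel₀ hm'.ne'
  have hpneg : 2 * d - 2 ≤ 0 := by linarith
  -- basic facts about w
  have hw0 : ∀ t, 0 ≤ w t := by
    intro t
    rw [hw t]
    apply mul_nonneg hC.le
    apply add_nonneg
    · split_ifs with h
      · exact Real.rpow_nonneg (by linarith) _
      · exact le_rfl
    · split_ifs
      · exact zero_le_one
      · exact le_rfl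
  have hwleC : ∀ t, w t ≤ C := by
    intro t
    rw [hw t]
    rcases le_or_gt t 1 with h | h
    · rw [if_neg (by linarith)]
      split_ifs <;> nlinarith
    · rw [if_pos h, if_neg (by rintro ⟨-, h2⟩; linarith)]
      have h1 : t ^ (2 * d - 2) ≤ 1 :=
        Real.rpow_le_one_of_one_le_of_nonpos h.le hpneg
      nlinarith
  have hwzero : ∀ t, t < -ε → w t = 0 := by
    intro t ht
    rw [hw t, if_neg (by intro h; nlinarith), if_neg (by rintro ⟨h1, -⟩; linarith)]
    ring
  have hwgt : ∀ t, 1 < t → w t = C * t ^ (2 * d - 2) := by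
    intro t ht
    rw [hw t, if_pos ht, if_neg (by rintro ⟨-, h2⟩; linarith)]
    ring
  -- summability of the base sequence
  have hT : Summable (fun n : ℤ => |(n:ℝ)| ^ (2 * d - 2)) := by
    have := Real.summable_abs_int_rpow (show (1:ℝ) < 2 - 2 * d by linarith)
    convert this using 2
    ring
  have hbound : ∀ i : ℤ, w (ε * i) ≤
      (if i ∈ Finset.Icc (-(m:ℤ)) (m:ℤ) then C else 0)
        + (C * ε ^ (2 * d - 2)) * |(i:ℝ)| ^ (2 * d - 2) := by
    intro i
    by_cases hi : i ∈ Finset.Icc (-(m:ℤ)) (m:ℤ)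
    · rw [if_pos hi]
      have h1 := hwleC (ε * i)
      have h2 : 0 ≤ (C * ε ^ (2 * d - 2)) * |(i:ℝ)| ^ (2 * d - 2) := by positivity
      linarith
    · rw [if_neg hi, zero_add]
      simp only [Finset.mem_Icc, not_and_or, not_le] at hi
      rcases hi with hi | hi
      · -- i < -m
        have hir : (i:ℝ) < -(m:ℝ) := by exact_mod_cast hi
        have : ε * i < -ε := by nlinarith
        rw [hwzero _ this]
        positivity
      · -- m < i
        have hir : (m:ℝ) < (i:ℝ) := by exact_mod_cast hi
        have h1 : 1 < ε * i := by nlinarith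
        rw [hwgt _ h1]
        have hi0 : (0:ℝ) ≤ (i:ℝ) := by linarith
        rw [Real.mul_rpow hε0.le hi0, abs_of_nonneg hi0]
        exact le_of_eq (by ring)
  have hsumg : Summable (fun i : ℤ =>
      (if i ∈ Finset.Icc (-(m:ℤ)) (m:ℤ) then C else 0)
        + (C * ε ^ (2 * d - 2)) * |(i:ℝ)| ^ (2 * d - 2)) := by
    apply Summable.add
    · exact summable_of_ne_finset_zero (s := Finset.Icc (-(m:ℤ)) (m:ℤ))
        (fun i hi => if_neg hi)
    · exact hT.mul_left _
  have hsumw : Summable (fun i : ℤ => w (ε * i)) :=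
    Summable.of_nonneg_of_le (fun i => hw0 _) hbound hsumg
  set S : ℝ := ∑' i : ℤ, w (ε * i) with hSdef
  have hS0 : 0 ≤ S := tsum_nonneg fun i => hw0 _
  -- summability and crude bound of the shifted products
  have hsum2 : ∀ x : ℝ, Summable (fun i : ℤ => w (ε * i) * w (ε * i + x)) := by
    intro x
    apply Summable.of_nonneg_of_le (fun i => mul_nonneg (hw0 _) (hw0 _))
      (fun i => mul_le_mul_of_nonneg_left (hwleC _) (hw0 _))
    exact hsumw.mul_right C
  have hfCS : ∀ x : ℝ, (∑' i : ℤ, w (ε * i) * w (ε * i + x)) ≤ S * C := by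
    intro x
    calc (∑' i : ℤ, w (ε * i) * w (ε * i + x))
        ≤ ∑' i : ℤ, w (ε * i) * C :=
          Summable.tsum_le_tsum (fun i => mul_le_mul_of_nonneg_left (hwleC _) (hw0 _))
            (hsum2 x) (hsumw.mul_right C)
      _ = S * C := tsum_mul_right
  have hK2 : (2:ℝ) ^ (2 - 2 * d) * (2:ℝ) ^ (2 * d - 2) = 1 := by
    rw [← Real.rpow_add (by norm_num : (0:ℝ) < 2),
      show (2 - 2 * d) + (2 * d - 2) = 0 by ring, Real.rpow_zero]
  have h2pos : (0:ℝ) < (2:ℝ) ^ (2 - 2 * d) := Real.rpow_pos_of_pos (by norm_num) _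
  -- pointwise bound for shifts ≥ 3
  have hptw : ∀ x : ℝ, 3 ≤ x → ∀ i : ℤ,
      w (ε * i) * w (ε * i + x) ≤ (C * (2:ℝ) ^ (2 - 2 * d) * x ^ (2 * d - 2)) * w (ε * i) := by
    intro x hx i
    rcases eq_or_ne (w (ε * i)) 0 with h0 | h0
    · rw [h0, zero_mul, mul_zero]
    · have hi : -ε ≤ ε * i := by
        by_contra hcon
        push_neg at hcon
        exact h0 (hwzero _ hcon)
      have hgt : 1 < ε * i + x := by nlinarith
      rw [hwgt _ hgt]
      have h1 : (ε * i + x) ^ (2 * d - 2) ≤ (x / 2) ^ (2 * d - 2) :=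
        Real.rpow_le_rpow_of_nonpos (by linarith) (by nlinarith) hpneg
      have h2 : (x / 2) ^ (2 * d - 2) = (2:ℝ) ^ (2 - 2 * d) * x ^ (2 * d - 2) := by
        rw [Real.div_rpow (by linarith) (by norm_num : (0:ℝ) ≤ 2), div_eq_mul_inv,
          ← Real.rpow_neg (by norm_num : (0:ℝ) ≤ 2),
          show -(2 * d - 2) = 2 - 2 * d by ring, mul_comm]
      calc w (ε * i) * (C * (ε * i + x) ^ (2 * d - 2))
          ≤ w (ε * i) * (C * ((2:ℝ) ^ (2 - 2 * d) * x ^ (2 * d - 2))) := by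
            apply mul_le_mul_of_nonneg_left _ (hw0 _)
            apply mul_le_mul_of_nonneg_left _ hC.le
            rw [← h2]; exact h1
        _ = (C * (2:ℝ) ^ (2 - 2 * d) * x ^ (2 * d - 2)) * w (ε * i) := by ring
  have hf3 : ∀ x : ℝ, 3 ≤ x →
      (∑' i : ℤ, w (ε * i) * w (ε * i + x)) ≤ C * (2:ℝ) ^ (2 - 2 * d) * S * x ^ (2 * d - 2) := by
    intro x hx
    calc (∑' i : ℤ, w (ε * i) * w (ε * i + x))
        ≤ ∑' i : ℤ, (C * (2:ℝ) ^ (2 - 2 * d) * x ^ (2 * d - 2)) * w (ε * i) :=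
          Summable.tsum_le_tsum (hptw x hx) (hsum2 x) (hsumw.mul_left _)
      _ = (C * (2:ℝ) ^ (2 - 2 * d) * x ^ (2 * d - 2)) * S := tsum_mul_left
      _ = C * (2:ℝ) ^ (2 - 2 * d) * S * x ^ (2 * d - 2) := by ring
  -- symmetry in the shift
  have hcast : ∀ j n : ℤ, ε * ((j + (m:ℤ) * n : ℤ) : ℝ) = ε * j + n := by
    intro j n
    push_cast
    rw [mul_add, ← mul_assoc, hεm, one_mul]
  have hsymm : ∀ n : ℤ, (∑' i : ℤ, w (ε * i) * w (ε * i + (n:ℝ)))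
      = ∑' i : ℤ, w (ε * i) * w (ε * i - (n:ℝ)) := by
    intro n
    rw [← (Equiv.addRight ((m:ℤ) * n)).tsum_eq
      (fun i : ℤ => w (ε * i) * w (ε * i - (n:ℝ)))]
    refine tsum_congr fun j => ?_
    simp only [Equiv.coe_addRight]
    rw [hcast j n, add_sub_cancel_right, mul_comm]
  -- the main decay bound, for all nonzero integer shifts
  have hmain : ∀ n : ℤ, 1 ≤ n →
      (∑' i : ℤ, w (ε * i) * w (ε * i + (n:ℝ)))
        ≤ C * (2:ℝ) ^ (2 - 2 * d) * S * (n:ℝ) ^ (2 * d - 2) := by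
    intro n hn
    rcases le_or_gt 3 n with h3 | h3
    · exact hf3 (n:ℝ) (by exact_mod_cast h3)
    · have hn2 : (n:ℝ) ≤ 2 := by exact_mod_cast (by omega : n ≤ 2)
      have hn1 : (1:ℝ) ≤ (n:ℝ) := by exact_mod_cast hn
      have h4 : (2:ℝ) ^ (2 * d - 2) ≤ (n:ℝ) ^ (2 * d - 2) :=
        Real.rpow_le_rpow_of_nonpos (by linarith) hn2 hpneg
      have h5 := hfCS (n:ℝ)
      have hKpos : 0 ≤ C * (2:ℝ) ^ (2 - 2 * d) * S := by positivity
      calc (∑' i : ℤ, w (ε * i) * w (ε * i + (n:ℝ))) ≤ S * C := h5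
        _ = (C * (2:ℝ) ^ (2 - 2 * d) * S) * (2:ℝ) ^ (2 * d - 2) := by
            linear_combination (-(C * S)) * hK2
        _ ≤ (C * (2:ℝ) ^ (2 - 2 * d) * S) * (n:ℝ) ^ (2 * d - 2) :=
            mul_le_mul_of_nonneg_left h4 hKpos
  have hfnonneg : ∀ x : ℝ, 0 ≤ ∑' i : ℤ, w (ε * i) * w (ε * i + x) :=
    fun x => tsum_nonneg fun i => mul_nonneg (hw0 _) (hw0 _)
  constructor
  · -- first claim
    rw [isBigO_iff]
    refine ⟨C * (2:ℝ) ^ (2 - 2 * d) * S, ?_⟩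
    filter_upwards [eventually_ge_atTop 1] with n hn
    have h := hmain (n : ℤ) (by exact_mod_cast hn)
    push_cast at h
    rw [Real.norm_eq_abs, Real.norm_eq_abs, abs_of_nonneg (hfnonneg _),
      abs_of_nonneg (Real.rpow_nonneg n.cast_nonneg _)]
    exact h
  · -- second claim
    have hK0 : 0 ≤ C * (2:ℝ) ^ (2 - 2 * d) * S := by positivity
    set K : ℝ := C * (2:ℝ) ^ (2 - 2 * d) * S with hKdef
    set g : ℤ → ℝ := fun n => (if n = 0 then S * C else 0) + K * |(n:ℝ)| ^ (2 * d - 2)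
      with hgdef
    have hg0 : ∀ n : ℤ, 0 ≤ g n := by
      intro n
      simp only [hgdef]
      have : 0 ≤ K * |(n:ℝ)| ^ (2 * d - 2) :=
        mul_nonneg hK0 (Real.rpow_nonneg (abs_nonneg _) _)
      split_ifs <;> nlinarith
    have hsumG : Summable g := by
      simp only [hgdef]
      apply Summable.add
      · exact summable_of_ne_finset_zero (s := {0})
          (fun n hn => if_neg (by simpa using hn))
      · exact hT.mul_left K
    have hfle : ∀ n : ℤ, (∑' i : ℤ, w (ε * i) * w (ε * i + (n:ℝ))) ≤ g n := by
      intro n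
      rcases eq_or_ne n 0 with rfl | hn0
      · simp only [hgdef]
        simp only [if_pos rfl, Int.cast_zero, abs_zero]
        rw [Real.zero_rpow (by linarith), mul_zero, add_zero]
        simpa using hfCS 0
      · simp only [hgdef]
        simp only [if_neg hn0, zero_add]
        rcases lt_or_ge 0 n with hn | hn
        · have := hmain n hn
          rwa [abs_of_nonneg (by exact_mod_cast hn.le : (0:ℝ) ≤ (n:ℝ))]
        · have hn1 : 1 ≤ -n := by omega
          have heq : (∑' i : ℤ, w (ε * i) * w (ε * i + (n:ℝ)))
              = ∑' i : ℤ, w (ε * i) * w (ε * i + ((-n : ℤ):ℝ)) := by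
            rw [hsymm (-n)]
            refine tsum_congr fun i => ?_
            congr 1
            push_cast
            ring
          rw [heq, abs_of_nonpos (by exact_mod_cast hn : (n:ℝ) ≤ 0)]
          have h6 := hmain (-n) hn1
          push_cast at h6 ⊢
          exact h6
    set B : ℝ := ∑' n : ℤ, g n with hBdef
    rw [isBigO_iff]
    refine ⟨B, Eventually.of_forall fun N => ?_⟩
    have inner : ∀ t : ℕ,
        (∑ s ∈ Finset.Icc 1 N, ∑' i : ℤ, w (ε * i) * w (ε * i + ((s - t : ℤ):ℝ))) ≤ B := by
      intro t
      have step1 : (∑ s ∈ Finset.Icc 1 N, ∑' i : ℤ, w (ε * i) * w (ε * i + ((s - t : ℤ):ℝ)))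
          ≤ ∑ s ∈ Finset.Icc 1 N, g ((s : ℤ) - (t : ℤ)) :=
        Finset.sum_le_sum fun s _ => hfle ((s : ℤ) - (t : ℤ))
      have hinj : ∀ x ∈ Finset.Icc 1 N, ∀ y ∈ Finset.Icc 1 N,
          ((x : ℤ) - (t : ℤ) = (y : ℤ) - (t : ℤ)) → x = y := by
        intro x _ y _ h
        have : (x : ℤ) = (y : ℤ) := by linarith [sub_left_inj.mp h]
        exact_mod_cast this
      have step2 : (∑ s ∈ Finset.Icc 1 N, g ((s : ℤ) - (t : ℤ)))
          = ∑ n ∈ (Finset.Icc 1 N).image (fun s : ℕ => (s : ℤ) - (t : ℤ)), g n :=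
        (Finset.sum_image hinj).symm
      calc (∑ s ∈ Finset.Icc 1 N, ∑' i : ℤ, w (ε * i) * w (ε * i + ((s - t : ℤ):ℝ)))
          ≤ ∑ s ∈ Finset.Icc 1 N, g ((s : ℤ) - (t : ℤ)) := step1
        _ = ∑ n ∈ (Finset.Icc 1 N).image (fun s : ℕ => (s : ℤ) - (t : ℤ)), g n := step2
        _ ≤ B := Summable.sum_le_tsum _ (fun n _ => hg0 n) hsumG
    have houter : (∑ t ∈ Finset.Icc 1 N, ∑ s ∈ Finset.Icc 1 N,
        ∑' i : ℤ, w (ε * i) * w (ε * i + ((s - t : ℤ):ℝ))) ≤ (N : ℝ) * B := by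
      calc (∑ t ∈ Finset.Icc 1 N, ∑ s ∈ Finset.Icc 1 N,
            ∑' i : ℤ, w (ε * i) * w (ε * i + ((s - t : ℤ):ℝ)))
          ≤ ∑ t ∈ Finset.Icc 1 N, B := Finset.sum_le_sum fun t _ => inner t
        _ = (N : ℝ) * B := by
            rw [Finset.sum_const, Nat.card_Icc, nsmul_eq_mul]
            norm_num
    have hnn : 0 ≤ ∑ t ∈ Finset.Icc 1 N, ∑ s ∈ Finset.Icc 1 N,
        ∑' i : ℤ, w (ε * i) * w (ε * i + ((s - t : ℤ):ℝ)) :=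
      Finset.sum_nonneg fun t _ => Finset.sum_nonneg fun s _ => hfnonneg _
    rw [Real.norm_eq_abs, Real.norm_eq_abs, abs_of_nonneg hnn,
      abs_of_nonneg (by positivity : (0:ℝ) ≤ (N:ℝ))]
    calc (∑ t ∈ Finset.Icc 1 N, ∑ s ∈ Finset.Icc 1 N,
          ∑' i : ℤ, w (ε * i) * w (ε * i + ((s - t : ℤ):ℝ)))
        ≤ (N : ℝ) * B := houter
      _ = B * (N : ℝ) := mul_comm _ _
end

section
/- Let f : ℝ → ℝ be bounded, vanish on (−∞, 0], satisfy f(t) ~ C_d t^{d−1} as t → ∞ with d ∈ (0, 1/2) and C_d > 0, and be left-continuous. Define f_m := Σ_{k=0}^∞ f(k/m)·1_{[k/m, (k+1)/m)} and, for h ∈ ℕ₀, G_h(s) := Σ_{i∈ℤ} f(i+s)f(i+h+s) and G_{m,h}(s) := Σ_{i∈ℤ} f_m(i+s)f_m(i+h+s) for s ∈ [0,1]. Then G_{m,h} → G_h in L^{α/2}([0,1]) as m → ∞, for any α ∈ (2, 4). -/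
open MeasureTheory Filter
open scoped ENNReal NNReal Topology

set_option maxHeartbeats 1000000

/-- For left-continuous `f`, the step approximations `G_{m,h}` converge to `G_h` in
`L^{α/2}([0,1])` as `m → ∞`, for `α ∈ (2,4)`. -/
theorem Gmh_tendsto_Gh (f : ℝ → ℝ) (d Cd α : ℝ) (h : ℕ)
    (hd0 : 0 < d) (hd : d < 1/2) (hCd : 0 < Cd) (hα1 : 2 < α) (hα2 : α < 4)
    (hbdd : ∃ M, ∀ t, |f t| ≤ M)
    (hzero : ∀ t ≤ (0:ℝ), f t = 0)
    (hasymp : Tendsto (fun t => f t / t ^ (d - 1)) atTop (nhds Cd))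
    (hlc : ∀ x : ℝ, ContinuousWithinAt f (Set.Iic x) x)
    (fm : ℕ → ℝ → ℝ)
    (hfm : ∀ m : ℕ, 0 < m → ∀ t : ℝ,
      fm m t = if 0 ≤ t then f ((⌊(m : ℝ) * t⌋ : ℝ) / m) else 0) :
    Tendsto (fun m : ℕ =>
        eLpNorm (fun s : ℝ =>
            (∑' i : ℤ, fm m (i + s) * fm m (i + h + s))
              - ∑' i : ℤ, f (i + s) * f (i + h + s))
          (ENNReal.ofReal (α / 2)) (volume.restrict (Set.Icc (0:ℝ) 1)))
      atTop (nhds 0) := by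
  classical
  have hp_neg : d - 1 ≤ 0 := by linarith
  obtain ⟨M, hM⟩ := hbdd
  have hM0 : 0 ≤ M := le_trans (abs_nonneg _) (hM 0)
  -- asymptotic bound on `f`
  obtain ⟨T, hT1, hT⟩ : ∃ T : ℝ, 1 ≤ T ∧ ∀ t, T ≤ t → |f t| ≤ (Cd + 1) * t ^ (d - 1) := by
    have h1 : ∀ᶠ t in atTop, f t / t ^ (d - 1) ∈ Set.Ioo (Cd - 1) (Cd + 1) :=
      hasymp (Ioo_mem_nhds (by linarith) (by linarith))
    obtain ⟨a, ha⟩ := eventually_atTop.mp h1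
    refine ⟨max a 1, le_max_right _ _, fun t ht => ?_⟩
    have hat : a ≤ t := le_trans (le_max_left _ _) ht
    have ht0 : (0:ℝ) < t := lt_of_lt_of_le zero_lt_one (le_trans (le_max_right _ _) ht)
    have htp : (0:ℝ) < t ^ (d - 1) := Real.rpow_pos_of_pos ht0 _
    have hr := ha t hat
    have hre : f t = (f t / t ^ (d - 1)) * t ^ (d - 1) := by
      field_simp
    rw [hre, abs_mul, abs_of_pos htp]
    apply mul_le_mul_of_nonneg_right _ htp.le
    rw [abs_le]
    obtain ⟨hr1, hr2⟩ := hr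
    constructor <;> [linarith; linarith]
  set K := max (Cd + 1) (M / T ^ (d - 1)) with hKdef
  have hKpos : 0 < K := lt_of_lt_of_le (by linarith) (le_max_left _ _)
  have hK : ∀ t : ℝ, 0 < t → |f t| ≤ K * t ^ (d - 1) := by
    intro t ht
    have htp : (0:ℝ) < t ^ (d - 1) := Real.rpow_pos_of_pos ht _
    rcases le_or_gt T t with h' | h'
    · exact le_trans (hT t h') (mul_le_mul_of_nonneg_right (le_max_left _ _) htp.le)
    · have hT0 : (0:ℝ) < T := by linarith
      have hTp : (0:ℝ) < T ^ (d - 1) := Real.rpow_pos_of_pos hT0 _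
      have hmono : T ^ (d - 1) ≤ t ^ (d - 1) :=
        Real.rpow_le_rpow_of_nonpos ht h'.le hp_neg
      calc |f t| ≤ M := hM t
        _ = (M / T ^ (d - 1)) * T ^ (d - 1) := by field_simp
        _ ≤ K * t ^ (d - 1) := by
            apply mul_le_mul (le_max_right _ _) hmono hTp.le hKpos.le
  set B := max M K with hBdef
  have hB0 : 0 ≤ B := le_trans hM0 (le_max_left _ _)
  set F : ℝ → ℝ := fun t => if t < 0 then 0 else if t ≤ 2 then B else K * (t - 1) ^ (d - 1)
    with hFdef
  have hF0 : ∀ t, 0 ≤ F t := by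
    intro t
    simp only [F]
    split_ifs with h1 h2
    · exact le_refl 0
    · exact hB0
    · exact mul_nonneg hKpos.le (Real.rpow_nonneg (by push_neg at h2; linarith) _)
  have hFB : ∀ t, F t ≤ B := by
    intro t
    simp only [F]
    split_ifs with h1 h2
    · exact hB0
    · exact le_refl B
    · push_neg at h2
      have : (t - 1) ^ (d - 1) ≤ 1 :=
        Real.rpow_le_one_of_one_le_of_nonpos (by linarith) hp_neg
      have hKB : K ≤ B := le_max_right M K
      nlinarith
  have hFgt : ∀ t : ℝ, 2 < t → F t = K * (t - 1) ^ (d - 1) := by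
    intro t ht
    simp only [F]
    rw [if_neg (by linarith), if_neg (by linarith)]
  have hFf : ∀ t, |f t| ≤ F t := by
    intro t
    simp only [F]
    split_ifs with h1 h2
    · rw [hzero t h1.le]; simp
    · exact le_trans (hM t) (le_max_left _ _)
    · push_neg at h1 h2
      refine le_trans (hK t (by linarith)) ?_
      apply mul_le_mul_of_nonneg_left _ hKpos.le
      exact Real.rpow_le_rpow_of_nonpos (by linarith) (by linarith) hp_neg
  have hFfm : ∀ m : ℕ, 0 < m → ∀ t, |fm m t| ≤ F t := by
    intro m hm t
    rw [hfm m hm t]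
    by_cases h1 : 0 ≤ t
    · rw [if_pos h1]
      set x : ℝ := (⌊(m : ℝ) * t⌋ : ℝ) / m with hx
      simp only [F]
      rw [if_neg (not_lt.mpr h1)]
      split_ifs with h2
      · exact le_trans (hM x) (le_max_left _ _)
      · push_neg at h2
        have hm' : (0:ℝ) < m := by exact_mod_cast hm
        have hfl : (m : ℝ) * t - 1 < (⌊(m : ℝ) * t⌋ : ℝ) := Int.sub_one_lt_floor _
        have hxgt : t - 1 ≤ x := by
          rw [hx, le_div_iff₀ hm']
          have hm1 : (1:ℝ) ≤ m := by exact_mod_cast hm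
          nlinarith
        have hxpos : 0 < x := by linarith
        refine le_trans (hK x hxpos) ?_
        apply mul_le_mul_of_nonneg_left _ hKpos.le
        exact Real.rpow_le_rpow_of_nonpos (by linarith) hxgt hp_neg
    · rw [if_neg h1]
      simpa using hF0 t
  -- summable comparison series
  have h2d : (1:ℝ) < 2 - 2*d := by linarith
  have hgsum : Summable (fun i : ℤ => K ^ 2 * 2 ^ (2 - 2*d) * |(i:ℝ)| ^ (2*d - 2)) := by
    have h0 := Real.summable_abs_int_rpow h2d
    have he : (fun n : ℤ => |(n:ℝ)| ^ (-(2 - 2*d))) = fun n : ℤ => |(n:ℝ)| ^ (2*d - 2) := by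
      funext n; norm_num
    rw [he] at h0
    exact h0.mul_left _
  have hgnn : ∀ i : ℤ, 0 ≤ K ^ 2 * 2 ^ (2 - 2*d) * |(i:ℝ)| ^ (2*d - 2) := by
    intro i
    positivity
  -- half lemma
  have half : ∀ (x : ℝ) (i : ℤ), 0 < (i:ℝ) → (i:ℝ)/2 ≤ x →
      x ^ (2*d - 2) ≤ 2 ^ (2 - 2*d) * |(i:ℝ)| ^ (2*d - 2) := by
    intro x i hi hx
    have hhalf : (0:ℝ) < (i:ℝ)/2 := by linarith
    have h1 : x ^ (2*d - 2) ≤ ((i:ℝ)/2) ^ (2*d - 2) :=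
      Real.rpow_le_rpow_of_nonpos hhalf hx (by linarith)
    refine le_trans h1 (le_of_eq ?_)
    rw [abs_of_pos hi, Real.div_rpow hi.le (by norm_num : (0:ℝ) ≤ 2), div_eq_inv_mul,
      ← Real.rpow_neg (by norm_num : (0:ℝ) ≤ 2)]
    norm_num
  -- product bound at large positive i
  have key : ∀ (s : ℝ) (i : ℤ), 0 < (i:ℝ) → 2 - s < (i:ℝ) → 1 - s ≤ (i:ℝ)/2 →
      F ((i:ℝ) + s) * F ((i:ℝ) + (h:ℝ) + s)
        ≤ K ^ 2 * 2 ^ (2 - 2*d) * |(i:ℝ)| ^ (2*d - 2) := by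
    intro s i hi h2s h1s
    have hh0 : (0:ℝ) ≤ (h:ℝ) := Nat.cast_nonneg _
    have ha : (2:ℝ) < (i:ℝ) + s := by linarith
    have hb : (2:ℝ) < (i:ℝ) + (h:ℝ) + s := by linarith
    rw [hFgt _ ha, hFgt _ hb]
    have hhalf : (0:ℝ) < (i:ℝ)/2 := by linarith
    have hx1 : (i:ℝ)/2 ≤ (i:ℝ) + s - 1 := by linarith
    have hx2 : (i:ℝ)/2 ≤ (i:ℝ) + (h:ℝ) + s - 1 := by linarith
    have hm1 : ((i:ℝ) + s - 1) ^ (d-1) ≤ ((i:ℝ)/2) ^ (d-1) :=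
      Real.rpow_le_rpow_of_nonpos hhalf hx1 hp_neg
    have hm2 : ((i:ℝ) + (h:ℝ) + s - 1) ^ (d-1) ≤ ((i:ℝ)/2) ^ (d-1) :=
      Real.rpow_le_rpow_of_nonpos hhalf hx2 hp_neg
    have hp1 : (0:ℝ) ≤ ((i:ℝ) + s - 1) ^ (d-1) := Real.rpow_nonneg (by linarith) _
    have hp2 : (0:ℝ) ≤ ((i:ℝ) + (h:ℝ) + s - 1) ^ (d-1) := Real.rpow_nonneg (by linarith) _
    have hhp : (0:ℝ) ≤ ((i:ℝ)/2) ^ (d-1) := Real.rpow_nonneg hhalf.le _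
    have hprod : K * ((i:ℝ) + s - 1) ^ (d-1) * (K * ((i:ℝ) + (h:ℝ) + s - 1) ^ (d-1))
        ≤ K ^ 2 * (((i:ℝ)/2) ^ (d-1) * ((i:ℝ)/2) ^ (d-1)) := by
      have := mul_le_mul hm1 hm2 hp2 hhp
      nlinarith
    refine le_trans hprod ?_
    have hsq : ((i:ℝ)/2) ^ (d-1) * ((i:ℝ)/2) ^ (d-1) = ((i:ℝ)/2) ^ (2*d - 2) := by
      rw [← Real.rpow_add hhalf]; ring_nf
    rw [hsq, mul_assoc]
    apply mul_le_mul_of_nonneg_left _ (by positivity : (0:ℝ) ≤ K ^ 2)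
    exact half _ i hi (le_refl _)
  -- summability of the dominating product series, for every `s`
  have hsum : ∀ s : ℝ, Summable (fun i : ℤ => F ((i:ℝ) + s) * F ((i:ℝ) + (h:ℝ) + s)) := by
    intro s
    apply Summable.of_norm_bounded_eventually hgsum
    rw [Int.cofinite_eq, eventually_sup]
    constructor
    · filter_upwards [eventually_le_atBot (⌊-s⌋ - 1)] with i hi
      have hcast : (i:ℝ) ≤ (⌊-s⌋:ℝ) - 1 := by exact_mod_cast hi
      have hfl : (⌊-s⌋:ℝ) ≤ -s := Int.floor_le _
      have hneg : (i:ℝ) + s < 0 := by linarith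
      have hFz : F ((i:ℝ) + s) = 0 := by simp only [F]; rw [if_pos hneg]
      rw [hFz, zero_mul, norm_zero]
      exact hgnn i
    · filter_upwards [eventually_ge_atTop (max 1 (max (⌈2 - s⌉ + 1) ⌈2*(1 - s)⌉))] with i hi
      have hi1 : (1:ℤ) ≤ i := le_trans (le_max_left _ _) hi
      have hi2 : (⌈2 - s⌉ + 1 : ℤ) ≤ i := le_trans (le_trans (le_max_left _ _) (le_max_right _ _)) hi
      have hi3 : (⌈2*(1 - s)⌉ : ℤ) ≤ i := le_trans (le_trans (le_max_right _ _) (le_max_right _ _)) hi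
      have hipos : (0:ℝ) < (i:ℝ) := by exact_mod_cast hi1
      have hc2 : (2 - s : ℝ) < (i:ℝ) := by
        have := Int.le_ceil (2 - s)
        have hcast : ((⌈2 - s⌉ + 1 : ℤ):ℝ) ≤ (i:ℝ) := by exact_mod_cast hi2
        push_cast at hcast
        linarith
      have hc3 : (1 - s : ℝ) ≤ (i:ℝ)/2 := by
        have := Int.le_ceil (2*(1 - s))
        have hcast : ((⌈2*(1 - s)⌉ : ℤ):ℝ) ≤ (i:ℝ) := by exact_mod_cast hi3
        linarith
      have hb := key s i hipos hc2 hc3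
      rw [Real.norm_eq_abs, abs_of_nonneg (mul_nonneg (hF0 _) (hF0 _))]
      exact hb
  -- a uniform summable bound for `s ∈ [0,1]`
  set b : ℤ → ℝ := fun i =>
    if i < -1 then 0 else if (i:ℝ) ≤ 2 then B ^ 2 else K ^ 2 * ((i:ℝ) - 1) ^ (2*d - 2)
    with hbdef
  have hbsum : Summable b := by
    apply Summable.of_norm_bounded_eventually hgsum
    rw [Int.cofinite_eq, eventually_sup]
    constructor
    · filter_upwards [eventually_le_atBot (-2)] with i hi
      have : i < -1 := by omega
      simp only [b]
      rw [if_pos this, norm_zero]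
      exact hgnn i
    · filter_upwards [eventually_ge_atTop 3] with i hi
      have hir : (3:ℝ) ≤ (i:ℝ) := by exact_mod_cast hi
      simp only [b]
      rw [if_neg (by omega), if_neg (by push_neg; linarith)]
      have hle : ((i:ℝ) - 1) ^ (2*d - 2) ≤ 2 ^ (2 - 2*d) * |(i:ℝ)| ^ (2*d - 2) :=
        half ((i:ℝ) - 1) i (by linarith) (by linarith)
      have hnn : (0:ℝ) ≤ K ^ 2 * ((i:ℝ) - 1) ^ (2*d - 2) := by
        have : (0:ℝ) ≤ ((i:ℝ) - 1) ^ (2*d - 2) := Real.rpow_nonneg (by linarith) _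
        positivity
      rw [Real.norm_eq_abs, abs_of_nonneg hnn, mul_assoc]
      exact mul_le_mul_of_nonneg_left hle (by positivity)
  have hble : ∀ s ∈ Set.Icc (0:ℝ) 1, ∀ i : ℤ,
      F ((i:ℝ) + s) * F ((i:ℝ) + (h:ℝ) + s) ≤ b i := by
    intro s hs i
    obtain ⟨hs0, hs1⟩ := hs
    have hh0 : (0:ℝ) ≤ (h:ℝ) := Nat.cast_nonneg _
    by_cases h1 : i < -1
    · have hir : (i:ℝ) ≤ -2 := by exact_mod_cast (by omega : i ≤ -2)
      have hneg : (i:ℝ) + s < 0 := by linarith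
      have hFz : F ((i:ℝ) + s) = 0 := by simp only [F]; rw [if_pos hneg]
      simp only [b]
      rw [hFz, zero_mul, if_pos h1]
    · by_cases h2 : (i:ℝ) ≤ 2
      · simp only [b]
        rw [if_neg h1, if_pos h2]
        have := mul_le_mul (hFB ((i:ℝ) + s)) (hFB ((i:ℝ) + (h:ℝ) + s)) (hF0 _) hB0
        nlinarith
      · push_neg at h2
        simp only [b]
        rw [if_neg h1, if_neg (not_le.mpr h2)]
        have ha : (2:ℝ) < (i:ℝ) + s := by linarith
        have hb' : (2:ℝ) < (i:ℝ) + (h:ℝ) + s := by linarith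
        rw [hFgt _ ha, hFgt _ hb']
        have him : (0:ℝ) < (i:ℝ) - 1 := by linarith
        have hm1 : ((i:ℝ) + s - 1) ^ (d-1) ≤ ((i:ℝ) - 1) ^ (d-1) :=
          Real.rpow_le_rpow_of_nonpos him (by linarith) hp_neg
        have hm2 : ((i:ℝ) + (h:ℝ) + s - 1) ^ (d-1) ≤ ((i:ℝ) - 1) ^ (d-1) :=
          Real.rpow_le_rpow_of_nonpos him (by linarith) hp_neg
        have hp2 : (0:ℝ) ≤ ((i:ℝ) + (h:ℝ) + s - 1) ^ (d-1) := Real.rpow_nonneg (by linarith) _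
        have hhp : (0:ℝ) ≤ ((i:ℝ) - 1) ^ (d-1) := Real.rpow_nonneg him.le _
        have hsq : ((i:ℝ) - 1) ^ (d-1) * ((i:ℝ) - 1) ^ (d-1) = ((i:ℝ) - 1) ^ (2*d - 2) := by
          rw [← Real.rpow_add him]; ring_nf
        have hmm : ((i:ℝ) + s - 1) ^ (d-1) * ((i:ℝ) + (h:ℝ) + s - 1) ^ (d-1)
            ≤ ((i:ℝ) - 1) ^ (d-1) * ((i:ℝ) - 1) ^ (d-1) := mul_le_mul hm1 hm2 hp2 hhp
        calc K * ((i:ℝ) + s - 1) ^ (d-1) * (K * ((i:ℝ) + (h:ℝ) + s - 1) ^ (d-1))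
            = K ^ 2 * (((i:ℝ) + s - 1) ^ (d-1) * ((i:ℝ) + (h:ℝ) + s - 1) ^ (d-1)) := by ring
          _ ≤ K ^ 2 * (((i:ℝ) - 1) ^ (d-1) * ((i:ℝ) - 1) ^ (d-1)) := by
              exact mul_le_mul_of_nonneg_left hmm (by positivity)
          _ = K ^ 2 * ((i:ℝ) - 1) ^ (2*d - 2) := by rw [hsq]
  set C0 := ∑' i : ℤ, b i with hC0def
  have hC0 : ∀ s ∈ Set.Icc (0:ℝ) 1,
      (∑' i : ℤ, F ((i:ℝ) + s) * F ((i:ℝ) + (h:ℝ) + s)) ≤ C0 := fun s hs =>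
    Summable.tsum_le_tsum (hble s hs) (hsum s) hbsum
  -- pointwise convergence of `fm` to `f`
  have hpt : ∀ t : ℝ, Tendsto (fun m : ℕ => fm (m+1) t) atTop (𝓝 (f t)) := by
    intro t
    rcases lt_or_ge t 0 with ht | ht
    · have he : ∀ m : ℕ, fm (m+1) t = 0 := fun m => by
        rw [hfm _ m.succ_pos, if_neg (not_le.mpr ht)]
      rw [hzero t ht.le]
      exact tendsto_const_nhds.congr fun m => (he m).symm
    · set u : ℕ → ℝ := fun m => (⌊((m+1:ℕ) : ℝ) * t⌋ : ℝ) / ((m+1:ℕ) : ℝ) with hu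
      have he : ∀ m : ℕ, fm (m+1) t = f (u m) := fun m => by
        rw [hfm _ m.succ_pos, if_pos ht]
      have hmpos : ∀ m : ℕ, (0:ℝ) < ((m+1:ℕ) : ℝ) := by
        intro m; exact_mod_cast m.succ_pos
      have hum : ∀ m, u m ≤ t := by
        intro m
        rw [hu, div_le_iff₀ (hmpos m)]
        calc (⌊((m+1:ℕ) : ℝ) * t⌋ : ℝ) ≤ ((m+1:ℕ) : ℝ) * t := Int.floor_le _
          _ = t * ((m+1:ℕ) : ℝ) := by ring
      have hul : ∀ m : ℕ, t - 1/((m:ℝ)+1) ≤ u m := by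
        intro m
        rw [hu, le_div_iff₀ (hmpos m)]
        have hfl : ((m+1:ℕ) : ℝ) * t - 1 < (⌊((m+1:ℕ) : ℝ) * t⌋ : ℝ) := Int.sub_one_lt_floor _
        have hc : ((m+1:ℕ) : ℝ) = (m:ℝ) + 1 := by push_cast; ring
        rw [hc] at hfl ⊢
        have hm1 : (0:ℝ) < (m:ℝ) + 1 := by positivity
        have : (t - 1/((m:ℝ)+1)) * ((m:ℝ)+1) = ((m:ℝ)+1) * t - 1 := by field_simp
        rw [this]
        linarith
      have hu_t : Tendsto u atTop (𝓝 t) := by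
        have hlow : Tendsto (fun m : ℕ => t - 1/((m:ℝ)+1)) atTop (𝓝 t) := by
          have := (tendsto_const_nhds : Tendsto (fun _ : ℕ => t) atTop (𝓝 t)).sub
            tendsto_one_div_add_atTop_nhds_zero_nat
          simpa using this
        exact tendsto_of_tendsto_of_tendsto_of_le_of_le hlow tendsto_const_nhds hul hum
      have hu_t' : Tendsto u atTop (𝓝[Set.Iic t] t) :=
        tendsto_nhdsWithin_iff.mpr ⟨hu_t, Eventually.of_forall fun m => hum m⟩
      exact ((hlc t).tendsto.comp hu_t').congr fun m => (he m).symm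
  -- measurability
  have hfm_meas : ∀ m : ℕ, 0 < m → Measurable (fm m) := by
    intro m hm
    have he : fm m = fun t => if 0 ≤ t then (fun k : ℤ => f ((k:ℝ) / m)) ⌊(m:ℝ) * t⌋ else 0 :=
      funext fun t => hfm m hm t
    rw [he]
    have h1 : Measurable fun t : ℝ => (fun k : ℤ => f ((k:ℝ) / m)) ⌊(m:ℝ) * t⌋ :=
      (measurable_of_countable (fun k : ℤ => f ((k:ℝ) / m))).comp
        ((measurable_id.const_mul ((m:ℝ))).floor)
    exact Measurable.ite (measurableSet_le measurable_const measurable_id) h1 measurable_const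
  have hf_meas : Measurable f :=
    measurable_of_tendsto_metrizable (fun m => hfm_meas (m+1) m.succ_pos)
      (tendsto_pi_nhds.mpr hpt)
  have hsum_of : ∀ g : ℝ → ℝ, (∀ t, |g t| ≤ F t) → ∀ s : ℝ,
      Summable (fun i : ℤ => g ((i:ℝ) + s) * g ((i:ℝ) + (h:ℝ) + s)) := by
    intro g hg s
    apply Summable.of_norm_bounded (hsum s)
    intro i
    rw [Real.norm_eq_abs, abs_mul]
    exact mul_le_mul (hg _) (hg _) (abs_nonneg _) (hF0 _)
  have hG_meas : ∀ g : ℝ → ℝ, Measurable g →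
      (∀ s : ℝ, Summable (fun i : ℤ => g ((i:ℝ) + s) * g ((i:ℝ) + (h:ℝ) + s))) →
      Measurable (fun s : ℝ => ∑' i : ℤ, g ((i:ℝ) + s) * g ((i:ℝ) + (h:ℝ) + s)) := by
    intro g hg hsg
    apply measurable_of_tendsto_metrizable' (atTop : Filter (Finset ℤ))
      (f := fun S : Finset ℤ => fun s : ℝ => ∑ i ∈ S, g ((i:ℝ) + s) * g ((i:ℝ) + (h:ℝ) + s))
    · intro S
      apply S.measurable_sum
      intro i _
      exact ((hg.comp (measurable_id.const_add _)).mul (hg.comp (measurable_id.const_add _)))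
    · exact tendsto_pi_nhds.mpr fun s => (hsg s).hasSum
  -- uniform bound on the G functions
  have habs : ∀ g : ℝ → ℝ, (∀ t, |g t| ≤ F t) → ∀ s ∈ Set.Icc (0:ℝ) 1,
      |∑' i : ℤ, g ((i:ℝ) + s) * g ((i:ℝ) + (h:ℝ) + s)| ≤ C0 := by
    intro g hg s hs
    have h1 : ‖∑' i : ℤ, g ((i:ℝ) + s) * g ((i:ℝ) + (h:ℝ) + s)‖
        ≤ ∑' i : ℤ, F ((i:ℝ) + s) * F ((i:ℝ) + (h:ℝ) + s) := by
      apply tsum_of_norm_bounded (hsum s).hasSum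
      intro i
      rw [Real.norm_eq_abs, abs_mul]
      exact mul_le_mul (hg _) (hg _) (abs_nonneg _) (hF0 _)
    rw [Real.norm_eq_abs] at h1
    exact le_trans h1 (hC0 s hs)
  -- pointwise convergence of the G functions
  have hGpt : ∀ s : ℝ, Tendsto
      (fun m : ℕ => ∑' i : ℤ, fm (m+1) ((i:ℝ) + s) * fm (m+1) ((i:ℝ) + (h:ℝ) + s)) atTop
      (𝓝 (∑' i : ℤ, f ((i:ℝ) + s) * f ((i:ℝ) + (h:ℝ) + s))) := by
    intro s
    apply tendsto_tsum_of_dominated_convergence (hsum s)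
    · intro i
      exact (hpt _).mul (hpt _)
    · refine Eventually.of_forall fun m i => ?_
      rw [Real.norm_eq_abs, abs_mul]
      exact mul_le_mul (hFfm _ (Nat.succ_pos m) _) (hFfm _ (Nat.succ_pos m) _)
        (abs_nonneg _) (hF0 _)
  -- the difference functions
  set D : ℕ → ℝ → ℝ := fun m s =>
    (∑' i : ℤ, fm m ((i:ℝ) + s) * fm m ((i:ℝ) + (h:ℝ) + s))
      - ∑' i : ℤ, f ((i:ℝ) + s) * f ((i:ℝ) + (h:ℝ) + s) with hDdef
  have hD_meas : ∀ m : ℕ, Measurable (D (m+1)) := by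
    intro m
    exact (hG_meas _ (hfm_meas (m+1) m.succ_pos)
        (hsum_of _ (hFfm (m+1) m.succ_pos))).sub (hG_meas _ hf_meas (hsum_of _ hFf))
  have hD_bd : ∀ m : ℕ, ∀ s ∈ Set.Icc (0:ℝ) 1, |D (m+1) s| ≤ 2 * C0 := by
    intro m s hs
    have h1 := habs _ (hFfm (m+1) m.succ_pos) s hs
    have h2 := habs _ hFf s hs
    simp only [D]
    calc |_ - _| ≤ |_| + |_| := abs_sub _ _
      _ ≤ 2 * C0 := by linarith
  have hD_pt : ∀ s : ℝ, Tendsto (fun m : ℕ => D (m+1) s) atTop (𝓝 0) := by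
    intro s
    have hc : Tendsto (fun _ : ℕ => ∑' i : ℤ, f ((i:ℝ) + s) * f ((i:ℝ) + (h:ℝ) + s)) atTop
        (𝓝 (∑' i : ℤ, f ((i:ℝ) + s) * f ((i:ℝ) + (h:ℝ) + s))) := tendsto_const_nhds
    have := (hGpt s).sub hc
    simpa [D] using this
  -- parameters
  have hp'pos : (0:ℝ) < α / 2 := by linarith
  have hp0 : ENNReal.ofReal (α / 2) ≠ 0 := by
    simp [ENNReal.ofReal_eq_zero, not_le, hp'pos]
  have hptop : ENNReal.ofReal (α / 2) ≠ ∞ := ENNReal.ofReal_ne_top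
  have hpt' : (ENNReal.ofReal (α / 2)).toReal = α / 2 := ENNReal.toReal_ofReal hp'pos.le
  -- dominated convergence for the lintegrals
  have hC0nn : (0:ℝ) ≤ C0 := by
    apply tsum_nonneg
    intro i
    simp only [b]
    split_ifs with h1 h2
    · exact le_refl 0
    · positivity
    · push_neg at h2
      have : (0:ℝ) ≤ ((i:ℝ) - 1) ^ (2*d - 2) := Real.rpow_nonneg (by linarith) _
      positivity
  have hlint : Tendsto (fun m : ℕ =>
      ∫⁻ s, (‖D (m+1) s‖₊ : ℝ≥0∞) ^ (α / 2) ∂(volume.restrict (Set.Icc (0:ℝ) 1)))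
      atTop (𝓝 0) := by
    have h0 : (0:ℝ≥0∞) = ∫⁻ _, (0:ℝ≥0∞) ∂(volume.restrict (Set.Icc (0:ℝ) 1)) := by
      simp
    rw [h0]
    apply tendsto_lintegral_of_dominated_convergence
      (bound := fun _ => ENNReal.ofReal ((2 * C0) ^ (α / 2)))
    · intro n
      exact (ENNReal.continuous_rpow_const.measurable).comp
        ((hD_meas n).nnnorm.coe_nnreal_ennreal)
    · intro n
      filter_upwards [ae_restrict_mem measurableSet_Icc] with s hs
      have h1 : (‖D (n+1) s‖₊ : ℝ≥0∞) = ENNReal.ofReal |D (n+1) s| := by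
        rw [← enorm_eq_nnnorm, ← ofReal_norm, Real.norm_eq_abs]
      rw [h1, ENNReal.ofReal_rpow_of_nonneg (abs_nonneg _) hp'pos.le]
      apply ENNReal.ofReal_le_ofReal
      exact Real.rpow_le_rpow (abs_nonneg _) (hD_bd n s hs) hp'pos.le
    · rw [lintegral_const, Measure.restrict_apply_univ, Real.volume_Icc]
      exact ENNReal.mul_ne_top ENNReal.ofReal_ne_top ENNReal.ofReal_ne_top
    · refine Eventually.of_forall fun s => ?_
      have h1 : Tendsto (fun m : ℕ => |D (m+1) s|) atTop (𝓝 0) := by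
        simpa using (hD_pt s).abs
      have h2 : Tendsto (fun m : ℕ => |D (m+1) s| ^ (α / 2)) atTop (𝓝 0) := by
        have hc : ContinuousAt (fun x : ℝ => x ^ (α / 2)) 0 :=
          Real.continuousAt_rpow_const 0 (α / 2) (Or.inr hp'pos.le)
        have := hc.tendsto.comp h1
        simpa [Real.zero_rpow (ne_of_gt hp'pos), Function.comp_def] using this
      have h3 : Tendsto (fun m : ℕ => ENNReal.ofReal (|D (m+1) s| ^ (α / 2))) atTop (𝓝 0) := by
        have := (ENNReal.continuous_ofReal.tendsto 0).comp h2
        simpa [Function.comp_def] using this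
      refine h3.congr fun m => ?_
      rw [← enorm_eq_nnnorm, ← ofReal_norm, Real.norm_eq_abs,
        ENNReal.ofReal_rpow_of_nonneg (abs_nonneg _) hp'pos.le]
  -- conclude
  rw [← tendsto_add_atTop_iff_nat 1]
  have heq : ∀ m : ℕ,
      eLpNorm (fun s : ℝ =>
          (∑' i : ℤ, fm (m+1) ((i:ℝ) + s) * fm (m+1) ((i:ℝ) + (h:ℝ) + s))
            - ∑' i : ℤ, f ((i:ℝ) + s) * f ((i:ℝ) + (h:ℝ) + s))
        (ENNReal.ofReal (α / 2)) (volume.restrict (Set.Icc (0:ℝ) 1))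
      = (∫⁻ s, (‖D (m+1) s‖₊ : ℝ≥0∞) ^ (α / 2)
          ∂(volume.restrict (Set.Icc (0:ℝ) 1))) ^ (1 / (α / 2)) := by
    intro m
    rw [eLpNorm_eq_lintegral_rpow_enorm_toReal hp0 hptop, hpt']
    rfl
  have hfin : Tendsto (fun m : ℕ =>
      (∫⁻ s, (‖D (m+1) s‖₊ : ℝ≥0∞) ^ (α / 2)
        ∂(volume.restrict (Set.Icc (0:ℝ) 1))) ^ (1 / (α / 2))) atTop (𝓝 0) := by
    have := hlint.ennrpow_const (1 / (α / 2))
    rwa [ENNReal.zero_rpow_of_pos (by positivity : (0:ℝ) < 1 / (α / 2))] at this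
  refine hfin.congr fun m => ?_
  exact (heq m).symm
end
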